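/- Let d ≥ 1 and let f : ℕ → ℕ be strictly increasing such that for every m ∈ ℕ there exists n ∈ ℕ with m ∣ f(n). Let L be the language over the alphabet Fin d consisting of all finite words w such that w_i ≠ w_{i+f(n)} whenever both indices lie within w (for all positions i and all n ∈ ℕ). If L contains arbitrarily long words, then L is not context-free (in particular, not regular). -/

import Mathlib

/-- A finite word `w` over the alphabet `Fin d` satisfies the exclusion rule for the
jump sequence `f` if `w_i ≠ w_{i+f n}` for all positions `i` and all `n ≥ 1` such that
both indices lie within `w`. -/
def ExclusionWord {d : ℕ} (f : ℕ → ℕ) (w : List (Fin d)) : Prop :=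
  ∀ (n : ℕ), 1 ≤ n → ∀ (i : ℕ) (h : i + f n < w.length),
    w.get ⟨i, Nat.lt_of_le_of_lt (Nat.le_add_right i (f n)) h⟩ ≠ w.get ⟨i + f n, h⟩

namespace ExclusionCF

open ContextFreeGrammar

variable {T : Type}

/-- Parse trees. -/
inductive PT (T N : Type) : Type where
  | leaf : T → PT T N
  | node : N → List (PT T N) → PT T N

namespace PT

variable {N : Type}

def root : PT T N → Symbol T N
  | leaf t => .terminal t
  | node A _ => .nonterminal A

mutual
def yield : PT T N → List T
  | .leaf t => [t]
  | .node _ cs => yields cs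
def yields : List (PT T N) → List T
  | [] => []
  | c :: cs => yield c ++ yields cs
end

mutual
def size : PT T N → ℕ
  | .leaf _ => 1
  | .node _ cs => 1 + sizes cs
def sizes : List (PT T N) → ℕ
  | [] => 0
  | c :: cs => size c + sizes cs
end

mutual
def height : PT T N → ℕ
  | .leaf _ => 0
  | .node _ cs => 1 + heights cs
def heights : List (PT T N) → ℕ
  | [] => 0
  | c :: cs => max (height c) (heights cs)
end

mutual
def labels : PT T N → List N
  | .leaf _ => []
  | .node A cs => A :: labelsL cs
def labelsL : List (PT T N) → List N
  | [] => []
  | c :: cs => labels c ++ labelsL cs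
end

lemma yields_append (l1 l2 : List (PT T N)) :
    yields (l1 ++ l2) = yields l1 ++ yields l2 := by
  induction l1 with
  | nil => simp [yields]
  | cons c cs ih => simp [yields, ih]

lemma sizes_append (l1 l2 : List (PT T N)) :
    sizes (l1 ++ l2) = sizes l1 + sizes l2 := by
  induction l1 with
  | nil => simp [sizes]
  | cons c cs ih => simp [sizes, ih]; omega

lemma size_pos : ∀ t : PT T N, 1 ≤ size t
  | .leaf _ => le_refl _
  | .node _ _ => by simp [size]

lemma size_le_of_mem {c : PT T N} {cs : List (PT T N)} (h : c ∈ cs) :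
    size c ≤ sizes cs := by
  induction cs with
  | nil => simp at h
  | cons a l ih =>
    rcases List.mem_cons.mp h with rfl | h
    · simp [sizes]
    · have := ih h; simp [sizes]; omega

lemma height_le_of_mem {c : PT T N} {cs : List (PT T N)} (h : c ∈ cs) :
    height c ≤ heights cs := by
  induction cs with
  | nil => simp at h
  | cons a l ih =>
    rcases List.mem_cons.mp h with rfl | h
    · simp [heights]
    · have := ih h; simp [heights]; omega

lemma exists_heights_le {cs : List (PT T N)} (h : cs ≠ []) :
    ∃ c ∈ cs, heights cs ≤ height c := by
  induction cs with
  | nil => simp at h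
  | cons a l ih =>
    rcases eq_or_ne l [] with rfl | hl
    · exact ⟨a, by simp, by simp [heights]⟩
    · obtain ⟨c, hc, hch⟩ := ih hl
      rcases le_total (heights l) (height a) with h1 | h1
      · exact ⟨a, by simp, by simp [heights]; omega⟩
      · exact ⟨c, by simp [hc], by simp [heights]; omega⟩

lemma mem_labelsL_of_mem {a : N} {c : PT T N} {cs : List (PT T N)}
    (hc : c ∈ cs) (ha : a ∈ labels c) : a ∈ labelsL cs := by
  induction cs with
  | nil => simp at hc
  | cons b l ih =>
    rcases List.mem_cons.mp hc with rfl | hc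
    · simp [labelsL]; exact Or.inl ha
    · simp [labelsL]; exact Or.inr (ih hc)

lemma exists_mem_of_mem_labelsL {a : N} {cs : List (PT T N)}
    (ha : a ∈ labelsL cs) : ∃ c ∈ cs, a ∈ labels c := by
  induction cs with
  | nil => simp [labelsL] at ha
  | cons b l ih =>
    simp [labelsL] at ha
    rcases ha with ha | ha
    · exact ⟨b, by simp, ha⟩
    · obtain ⟨c, hc, h⟩ := ih ha
      exact ⟨c, by simp [hc], h⟩

lemma yields_length_le {cs : List (PT T N)} {M : ℕ}
    (h : ∀ c ∈ cs, (yield c).length ≤ M) :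
    (yields cs).length ≤ cs.length * M := by
  induction cs with
  | nil => simp [yields]
  | cons a l ih =>
    have h1 := h a (by simp)
    have h2 := ih (fun c hc => h c (by simp [hc]))
    simp [yields]
    calc (yield a).length + (yields l).length ≤ M + l.length * M := by omega
    _ = (l.length + 1) * M := by ring
    _ = _ := by omega

end PT

open PT

variable {g : ContextFreeGrammar.{0} T}

/-- Validity of a parse tree w.r.t. a grammar. -/
inductive Valid (g : ContextFreeGrammar.{0} T) : PT T g.NT → Prop
  | leaf (t : T) : Valid g (.leaf t)
  | node (r : ContextFreeRule T g.NT) (hr : r ∈ g.rules) (cs : List (PT T g.NT))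
      (hroots : cs.map root = r.output)
      (hcs : ∀ c ∈ cs, Valid g c) : Valid g (.node r.input cs)

local notation "tm" => List.map (Symbol.terminal : T → Symbol T g.NT)

lemma derives_append_congr {a a' b b' : List (Symbol T g.NT)}
    (h1 : g.Derives a a') (h2 : g.Derives b b') : g.Derives (a ++ b) (a' ++ b') :=
  (h1.append_right b).trans (h2.append_left a')

lemma derives_append3 {a a' b b' c c' : List (Symbol T g.NT)}
    (h1 : g.Derives a a') (h2 : g.Derives b b') (h3 : g.Derives c c') :
    g.Derives (a ++ b ++ c) (a' ++ b' ++ c') :=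
  derives_append_congr (derives_append_congr h1 h2) h3

lemma derives_list_of_each {cs : List (PT T g.NT)}
    (h : ∀ c ∈ cs, g.Derives [root c] (tm (yield c))) :
    g.Derives (cs.map root) (tm (yields cs)) := by
  induction cs with
  | nil => exact Derives.refl _
  | cons a l ih =>
    have : g.Derives ([root a] ++ l.map root) (tm (yield a) ++ tm (yields l)) :=
      derives_append_congr (h a (by simp)) (ih (fun c hc => h c (by simp [hc])))
    simpa [yields] using this

lemma tree_derives {t : PT T g.NT} (hv : Valid g t) :
    g.Derives [root t] (tm (yield t)) := by
  induction hv with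
  | leaf t => exact Derives.refl _
  | node r hr cs hroots hcs ih =>
    have h1 : g.Produces [root (PT.node r.input cs)] (cs.map root) := by
      rw [hroots]; exact ⟨r, hr, ContextFreeRule.Rewrites.input_output⟩
    exact h1.trans_derives (by simpa [yield] using derives_list_of_each ih)

lemma derives_tree {α : List (Symbol T g.NT)} {w : List T}
    (h : g.Derives α (tm w)) :
    ∃ ts : List (PT T g.NT), ts.map root = α ∧ (∀ t ∈ ts, Valid g t) ∧ yields ts = w := by
  induction h using Relation.ReflTransGen.head_induction_on with
  | refl =>
    refine ⟨w.map PT.leaf, by simp [root], by simp; intro a _; exact Valid.leaf a, ?_⟩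
    induction w with
    | nil => simp [yields]
    | cons a l ih => simp [yields, yield] at *; exact ih
  | head hstep _ ih =>
    obtain ⟨ts, hroots, hvalid, hyields⟩ := ih
    obtain ⟨r, hr, hrw⟩ := hstep
    obtain ⟨p, q, hin, hout⟩ := hrw.exists_parts
    rw [hout] at hroots
    rw [List.append_assoc] at hroots
    obtain ⟨ts1, ts', hts, hm1, hm'⟩ := List.map_eq_append_iff.mp hroots
    obtain ⟨ts2, ts3, hts', hm2, hm3⟩ := List.map_eq_append_iff.mp hm'
    subst hts' hts
    refine ⟨ts1 ++ [PT.node r.input ts2] ++ ts3, ?_, ?_, ?_⟩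
    · simp [hin, root, hm1, hm3]
    · intro t ht
      have hmem : t ∈ ts1 ∨ t = PT.node r.input ts2 ∨ t ∈ ts3 := by
        simp at ht; tauto
      rcases hmem with ht | rfl | ht
      · exact hvalid t (List.mem_append.mpr (Or.inl ht))
      · exact Valid.node r hr ts2 hm2
          (fun c hc => hvalid c (List.mem_append.mpr (Or.inr (List.mem_append.mpr (Or.inl hc)))))
      · exact hvalid t (List.mem_append.mpr (Or.inr (List.mem_append.mpr (Or.inr ht))))
    · rw [← hyields]
      simp [yields_append, yields, yield]

lemma yield_length_le {R : ℕ} (hR : 1 ≤ R)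
    (hrule : ∀ r ∈ g.rules, r.output.length ≤ R)
    {t : PT T g.NT} (hv : Valid g t) : (yield t).length ≤ R ^ height t := by
  induction hv with
  | leaf t => simp [yield, height]
  | node r hr cs hroots hcs ih =>
    have hlen : cs.length ≤ R := by
      have := hrule r hr
      rw [← hroots] at this; simpa using this
    have hbound : ∀ c ∈ cs, (yield c).length ≤ R ^ heights cs := fun c hc =>
      (ih c hc).trans (Nat.pow_le_pow_right hR (height_le_of_mem hc))
    calc (yield (PT.node r.input cs)).length = (yields cs).length := by simp [yield]
      _ ≤ cs.length * R ^ heights cs := yields_length_le hbound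
      _ ≤ R * R ^ heights cs := Nat.mul_le_mul_right _ hlen
      _ = R ^ height (PT.node r.input cs) := by simp [height, pow_succ]; ring

lemma labels_input {t : PT T g.NT} (hv : Valid g t) :
    ∀ a ∈ labels t, ∃ r ∈ g.rules, r.input = a := by
  induction hv with
  | leaf t => simp [labels]
  | node r hr cs hroots hcs ih =>
    intro a ha
    simp [labels] at ha
    rcases ha with rfl | ha
    · exact ⟨r, hr, rfl⟩
    · obtain ⟨c, hc, hac⟩ := exists_mem_of_mem_labelsL ha
      exact ih c hc a hac

/-- Extraction of an occurrence of a nonterminal. -/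
lemma extract {t : PT T g.NT} (hv : Valid g t) :
    ∀ A ∈ labels t,
      ∃ (vv yy : List T) (t' : PT T g.NT), Valid g t' ∧ root t' = Symbol.nonterminal A ∧
        size t' ≤ size t ∧ yield t = vv ++ yield t' ++ yy ∧
        g.Derives [root t] (tm vv ++ [Symbol.nonterminal A] ++ tm yy) := by
  induction hv with
  | leaf t => simp [labels]
  | node r hr cs hroots hcs ih =>
    intro A hA
    simp [labels] at hA
    rcases hA with rfl | hA
    · exact ⟨[], [], PT.node r.input cs, Valid.node r hr cs hroots hcs, rfl, le_refl _,
        by simp, by simpa [root] using Derives.refl (g := g) [Symbol.nonterminal r.input]⟩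
    · obtain ⟨c, hc, hAc⟩ := exists_mem_of_mem_labelsL hA
      obtain ⟨vv, yy, t', hvt', hroot', hsize', hyield', hder'⟩ := ih c hc A hAc
      obtain ⟨cs1, cs2, rfl⟩ := List.append_of_mem hc
      refine ⟨yields cs1 ++ vv, yy ++ yields cs2, t', hvt', hroot', ?_, ?_, ?_⟩
      · have h1 : size c ≤ sizes (cs1 ++ c :: cs2) := size_le_of_mem hc
        simp [size]; omega
      · simp [yield, yields_append, yields, hyield']
      · have hstep : g.Produces [root (PT.node r.input (cs1 ++ c :: cs2))]
            ((cs1 ++ c :: cs2).map root) := by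
          rw [hroots]; exact ⟨r, hr, ContextFreeRule.Rewrites.input_output⟩
        have hmid : g.Derives ((cs1.map root) ++ [root c] ++ (cs2.map root))
            (tm (yields cs1) ++ (tm vv ++ [Symbol.nonterminal A] ++ tm yy) ++ tm (yields cs2)) :=
          derives_append3
            (derives_list_of_each (fun x hx => tree_derives (hcs x (by simp [hx]))))
            hder'
            (derives_list_of_each (fun x hx => tree_derives (hcs x (by simp [hx]))))
        refine hstep.trans_derives ?_
        have : (cs1 ++ c :: cs2).map root = (cs1.map root) ++ [root c] ++ (cs2.map root) := by
          simp
        rw [this]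
        refine hmid.trans ?_
        simp
        rfl

lemma Valid.node_inv {A : g.NT} {cs : List (PT T g.NT)} (h : Valid g (.node A cs)) :
    ∃ r ∈ g.rules, r.input = A ∧ cs.map root = r.output ∧ ∀ c ∈ cs, Valid g c := by
  cases h with
  | node r hr cs hroots hcs => exact ⟨r, hr, rfl, hroots, hcs⟩

lemma main_pump [DecidableEq g.NT] :
    ∀ (Nb : ℕ) (t : PT T g.NT), size t ≤ Nb → Valid g t →
    ∀ A : g.NT, root t = Symbol.nonterminal A →
    (labels t).toFinset.card < height t →
    (∃ t' : PT T g.NT, Valid g t' ∧ root t' = root t ∧ yield t' = yield t ∧ size t' < size t) ∨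
    (∃ (B : g.NT) (u z v y x : List T), v ++ y ≠ [] ∧
      g.Derives [root t] (tm u ++ [Symbol.nonterminal B] ++ tm z) ∧
      g.Derives [Symbol.nonterminal B] (tm v ++ [Symbol.nonterminal B] ++ tm y) ∧
      g.Derives [Symbol.nonterminal B] (tm x)) := by
  intro Nb
  induction Nb with
  | zero => intro t ht _ _ _ _; have := size_pos t; omega
  | succ Nb IH =>
    intro t htN hv A hroot hcard
    cases t with
    | leaf a => simp [root] at hroot
    | node A' cs =>
      obtain ⟨r, hr, hA', hroots, hcs⟩ := hv.node_inv
      subst hA'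
      have hA : A = r.input := by
        simp [root] at hroot; exact hroot.symm
      subst hA
      · 
        -- basic facts
        have hcardpos : 1 ≤ (labels (PT.node r.input cs)).toFinset.card := by
          refine Finset.card_pos.mpr ⟨r.input, ?_⟩
          simp [labels]
        have hheights : 1 ≤ heights cs := by
          have : height (PT.node r.input cs) = 1 + heights cs := rfl
          omega
        have hcsne : cs ≠ [] := by
          intro h; subst h; simp [heights] at hheights
        obtain ⟨c, hc, hch⟩ := exists_heights_le hcsne
        obtain ⟨cs1, cs2, hsplit⟩ := List.append_of_mem hc
        have hsizec : size c < size (PT.node r.input cs) := by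
          have h1 : size c ≤ sizes cs := size_le_of_mem hc
          have : size (PT.node r.input cs) = 1 + sizes cs := rfl
          omega
        have hyieldt : yield (PT.node r.input cs) = yields cs1 ++ yield c ++ yields cs2 := by
          subst hsplit
          simp [yield, yields_append, yields]
        have hrootst : List.map root cs = List.map root cs1 ++ [root c] ++ List.map root cs2 := by
          subst hsplit; simp
        have hstep : g.Produces [root (PT.node r.input cs)] (List.map root cs) := by
          rw [hroots]; exact ⟨r, hr, ContextFreeRule.Rewrites.input_output⟩
        have hcs1 : ∀ x ∈ cs1, Valid g x := fun x hx => hcs x (by simp [hsplit, hx])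
        have hcs2 : ∀ x ∈ cs2, Valid g x := fun x hx => hcs x (by simp [hsplit, hx])
        by_cases hmem : r.input ∈ labels c
        · -- repetition found
          obtain ⟨vv, yy, t'', hvt'', hroot'', hsize'', hyield'', hder''⟩ :=
            extract (hcs c hc) r.input hmem
          by_cases hemp : yields cs1 ++ vv = [] ∧ yy ++ yields cs2 = []
          · -- shrink
            left
            refine ⟨t'', hvt'', ?_, ?_, ?_⟩
            · rw [hroot'']; rfl
            · rw [hyieldt, hyield'']
              rcases hemp with ⟨h1, h2⟩
              rcases List.append_eq_nil_iff.mp h1 with ⟨e1, e2⟩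
              rcases List.append_eq_nil_iff.mp h2 with ⟨e3, e4⟩
              simp [e1, e2, e3, e4]
            · omega
          · -- pump
            right
            have hloop : g.Derives [Symbol.nonterminal r.input]
                (tm (yields cs1 ++ vv) ++ [Symbol.nonterminal r.input] ++ tm (yy ++ yields cs2)) := by
              refine hstep.trans_derives ?_
              rw [hrootst]
              refine (derives_append3 (derives_list_of_each (fun x hx => tree_derives (hcs1 x hx)))
                hder'' (derives_list_of_each (fun x hx => tree_derives (hcs2 x hx)))).trans ?_
              simp
              rfl
            refine ⟨r.input, [], [], yields cs1 ++ vv, yy ++ yields cs2, yield t'', ?_, ?_, hloop, ?_⟩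
            · intro h
              rcases List.append_eq_nil_iff.mp h with ⟨h1, h2⟩
              exact hemp ⟨h1, h2⟩
            · simpa [root] using Derives.refl (g := g) [Symbol.nonterminal r.input]
            · rw [← hroot'']; exact tree_derives hvt''
        · -- recurse into tallest child
          have hsubset : (labels c).toFinset ⊆
              ((labels (PT.node r.input cs)).toFinset).erase r.input := by
            intro b hb
            simp at hb
            refine Finset.mem_erase.mpr ⟨?_, ?_⟩
            · rintro rfl; exact hmem hb
            · simp [labels]
              exact Or.inr (mem_labelsL_of_mem hc hb)
          have hcardc : (labels c).toFinset.card < height c := by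
            have h1 := Finset.card_le_card hsubset
            have h2 : (((labels (PT.node r.input cs)).toFinset).erase r.input).card
                = (labels (PT.node r.input cs)).toFinset.card - 1 :=
              Finset.card_erase_of_mem (by simp [labels])
            have h3 : height (PT.node r.input cs) = 1 + heights cs := rfl
            omega
          cases c with
          | leaf a =>
            have : height (PT.leaf a : PT T g.NT) = 0 := rfl
            omega
          | node B' cs' =>
            have hrootc : root (PT.node B' cs') = Symbol.nonterminal B' := rfl
            have hres := IH (PT.node B' cs') (by omega) (hcs _ hc) B' hrootc hcardc
            rcases hres with ⟨t', hvt', hroott', hyieldt', hsizet'⟩ | 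
              ⟨B, u, z, v, y, x, hne, h1, h2, h3⟩
            · -- replace child by smaller tree
              left
              refine ⟨PT.node r.input (cs1 ++ t' :: cs2), ?_, rfl, ?_, ?_⟩
              · refine Valid.node r hr _ ?_ ?_
                · rw [← hroots, hsplit]
                  simp [hroott']
                · intro x hx
                  simp at hx
                  rcases hx with hx | rfl | hx
                  · exact hcs1 x hx
                  · exact hvt'
                  · exact hcs2 x hx
              · rw [hyieldt]
                simp [yield, yields_append, yields, hyieldt']
              · subst hsplit
                have e1 : size (PT.node r.input (cs1 ++ t' :: cs2))
                    = 1 + (sizes cs1 + (size t' + sizes cs2)) := by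
                  simp [size, sizes_append, sizes]
                have e2 : size (PT.node r.input (cs1 ++ (PT.node B' cs') :: cs2))
                    = 1 + (sizes cs1 + (size (PT.node B' cs') + sizes cs2)) := by
                  simp [size, sizes_append, sizes]
                omega
            · -- lift pumping data
              right
              refine ⟨B, yields cs1 ++ u, z ++ yields cs2, v, y, x, hne, ?_, h2, h3⟩
              refine hstep.trans_derives ?_
              rw [hrootst]
              refine (derives_append3 (derives_list_of_each (fun x hx => tree_derives (hcs1 x hx)))
                h1 (derives_list_of_each (fun x hx => tree_derives (hcs2 x hx)))).trans ?_
              simp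
              rfl

lemma loop_pow {B : g.NT} {v y : List T}
    (h : g.Derives [Symbol.nonterminal B] (tm v ++ [Symbol.nonterminal B] ++ tm y)) (k : ℕ) :
    g.Derives [Symbol.nonterminal B]
      (tm ((List.replicate k v).flatten) ++ [Symbol.nonterminal B] ++
        tm ((List.replicate k y).flatten)) := by
  induction k with
  | zero => simpa using Derives.refl (g := g) [Symbol.nonterminal B]
  | succ k ih =>
    have h2 := h.trans (derives_append3 (Derives.refl (tm v)) ih (Derives.refl (tm y)))
    have e : tm v ++ (tm ((List.replicate k v).flatten) ++ [Symbol.nonterminal B] ++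
          tm ((List.replicate k y).flatten)) ++ tm y
        = tm ((List.replicate (k+1) v).flatten) ++ [Symbol.nonterminal B] ++
          tm ((List.replicate (k+1) y).flatten) := by
      rw [List.replicate_succ (a := v), List.replicate_succ' (n := k) (a := y)]
      simp
    exact e ▸ h2

lemma pumping_family (hlong : ∀ N : ℕ, ∃ w ∈ g.language, N ≤ w.length) :
    ∃ u v x y z : List T, v ++ y ≠ [] ∧ ∀ k : ℕ,
      u ++ (List.replicate k v).flatten ++ x ++ (List.replicate k y).flatten ++ z
        ∈ g.language := by
  classical
  set R : ℕ := (g.rules.sup fun r => r.output.length) + 1 with hR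
  have hR1 : 1 ≤ R := by omega
  have hrule : ∀ r ∈ g.rules, r.output.length ≤ R := by
    intro r hr
    have := Finset.le_sup (f := fun r => r.output.length) hr
    exact le_trans this (by omega)
  set P : ℕ := (g.rules.image fun r => r.input).card with hP
  obtain ⟨w, hw, hwl⟩ := hlong (R ^ P + 1)
  rw [ContextFreeGrammar.mem_language_iff] at hw
  obtain ⟨ts, hroots, hvalid, hyields⟩ := derives_tree hw
  -- ts is a single tree
  obtain ⟨t1, rfl⟩ : ∃ t1, ts = [t1] := by
    cases ts with
    | nil => simp at hroots
    | cons a l =>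
      cases l with
      | nil => exact ⟨a, rfl⟩
      | cons b l' => simp at hroots
  have hroott1 : root t1 = Symbol.nonterminal g.initial := by simpa using hroots
  have hyt1 : yield t1 = w := by simpa [yields] using hyields
  -- minimal tree with same root and yield
  have hex : ∃ n, ∃ t : PT T g.NT, Valid g t ∧ root t = Symbol.nonterminal g.initial ∧
      yield t = w ∧ size t = n :=
    ⟨size t1, t1, hvalid t1 (by simp), hroott1, hyt1, rfl⟩
  obtain ⟨t0, hv0, hroot0, hy0, hsz0⟩ := Nat.find_spec hex
  have hmin : ∀ m < Nat.find hex, ¬ ∃ t : PT T g.NT, Valid g t ∧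
      root t = Symbol.nonterminal g.initial ∧ yield t = w ∧ size t = m :=
    fun m hm => Nat.find_min hex hm
  -- height exceeds number of labels
  have hlab : (labels t0).toFinset ⊆ g.rules.image fun r => r.input := by
    intro a ha
    simp at ha
    obtain ⟨r, hr, hra⟩ := labels_input hv0 a ha
    exact Finset.mem_image.mpr ⟨r, hr, hra⟩
  have hcard : (labels t0).toFinset.card < height t0 := by
    by_contra hcon
    push_neg at hcon
    have h1 : (yield t0).length ≤ R ^ height t0 := yield_length_le hR1 hrule hv0
    have h2 : R ^ height t0 ≤ R ^ (labels t0).toFinset.card := Nat.pow_le_pow_right hR1 hcon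
    have h3 : (labels t0).toFinset.card ≤ P := Finset.card_le_card hlab
    have h4 : R ^ (labels t0).toFinset.card ≤ R ^ P := Nat.pow_le_pow_right hR1 h3
    rw [hy0] at h1
    omega
  rcases main_pump (size t0) t0 (le_refl _) hv0 g.initial hroot0 hcard with
    ⟨t', hvt', hroott', hyieldt', hsizet'⟩ | ⟨B, u, z, v, y, x, hne, h1, h2, h3⟩
  · exact absurd ⟨t', hvt', by rw [hroott', hroot0], by rw [hyieldt', hy0], rfl⟩
      (hmin (size t') (by omega))
  · refine ⟨u, v, x, y, z, hne, fun k => ?_⟩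
    rw [ContextFreeGrammar.mem_language_iff]
    rw [hroot0] at h1
    have hmid : g.Derives [Symbol.nonterminal B]
        (tm ((List.replicate k v).flatten) ++ tm x ++ tm ((List.replicate k y).flatten)) :=
      (loop_pow h2 k).trans (derives_append3 (Derives.refl _) h3 (Derives.refl _))
    have hfull := h1.trans (derives_append3 (Derives.refl (tm u)) hmid (Derives.refl (tm z)))
    have e : List.map Symbol.terminal u ++
        (List.map Symbol.terminal (List.replicate k v).flatten ++ List.map Symbol.terminal x ++
          List.map Symbol.terminal (List.replicate k y).flatten) ++
      List.map Symbol.terminal z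
        = List.map (Symbol.terminal : T → Symbol T g.NT)
            (u ++ (List.replicate k v).flatten ++ x ++ (List.replicate k y).flatten ++ z) := by
      simp
    exact e ▸ hfull

end ExclusionCF

lemma get_eq_of_eq {α : Type*} {l l' : List α} (h : l = l') {i : ℕ} {h1 : i < l.length}
    {h2 : i < l'.length} : l.get ⟨i, h1⟩ = l'.get ⟨i, h2⟩ := by subst h; rfl

lemma get_idx_congr {α : Type*} {l : List α} {i j : ℕ} (hij : i = j) {h1 : i < l.length}
    {h2 : j < l.length} : l.get ⟨i, h1⟩ = l.get ⟨j, h2⟩ := by subst hij; rfl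

lemma get_append_mid {α : Type*} (a b r : List α) (h0 : 0 < b.length)
    (h : a.length < (a ++ (b ++ r)).length) :
    (a ++ (b ++ r)).get ⟨a.length, h⟩ = b.get ⟨0, h0⟩ := by
  induction a with
  | nil =>
    cases b with
    | nil => simp at h0
    | cons x tl => rfl
  | cons x a' ih =>
    have h' : a'.length < (a' ++ (b ++ r)).length := by simp; omega
    have := ih h'
    simp only [List.get_eq_getElem, List.cons_append, List.length_cons,
      List.getElem_cons_succ] at *
    exact this

lemma violate {d : ℕ} (f : ℕ → ℕ) (p c s : List (Fin d)) (hc : c ≠ []) (n t : ℕ)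
    (hn : 1 ≤ n) (hfn : f n = c.length * t) :
    ¬ ExclusionWord f (p ++ (List.replicate (t+1) c).flatten ++ s) := by
  intro hex
  have hm : 0 < c.length := List.length_pos_iff.mpr hc
  set W := p ++ (List.replicate (t+1) c).flatten ++ s with hW
  have hlen : W.length = p.length + (t+1) * c.length + s.length := by
    simp [hW, List.length_flatten, List.map_replicate, List.sum_replicate, smul_eq_mul]
    omega
  have hmul : (t+1) * c.length = c.length * t + c.length := by ring
  have hbound : p.length + f n < W.length := by
    rw [hfn]; omega
  have key := hex n hn p.length hbound
  apply key
  have hW1 : W = p ++ (c ++ ((List.replicate t c).flatten ++ s)) := by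
    simp [hW, List.replicate_succ]
  have hW2 : W = (p ++ (List.replicate t c).flatten) ++ (c ++ s) := by
    rw [hW, List.replicate_succ' (n := t) (a := c)]
    simp
  have hlen2 : (p ++ (List.replicate t c).flatten).length = p.length + f n := by
    simp [List.length_flatten, List.map_replicate, List.sum_replicate, smul_eq_mul, hfn]
    ring
  have hb1 : p.length < (p ++ (c ++ ((List.replicate t c).flatten ++ s))).length := by
    rw [← hW1]; omega
  have hb2 : (p ++ (List.replicate t c).flatten).length <
      ((p ++ (List.replicate t c).flatten) ++ (c ++ s)).length := by
    rw [← hW2, hlen2]; omega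
  have e0 : W.get ⟨p.length, Nat.lt_of_le_of_lt (Nat.le_add_right _ _) hbound⟩
      = c.get ⟨0, hm⟩ :=
    (get_eq_of_eq hW1).trans (get_append_mid p c _ hm hb1)
  have hb2' : p.length + f n < ((p ++ (List.replicate t c).flatten) ++ (c ++ s)).length := by
    rw [← hW2]; exact hbound
  have e1 : W.get ⟨p.length + f n, hbound⟩ = c.get ⟨0, hm⟩ := by
    have s1 : W.get ⟨p.length + f n, hbound⟩
        = ((p ++ (List.replicate t c).flatten) ++ (c ++ s)).get ⟨p.length + f n, hb2'⟩ :=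
      get_eq_of_eq hW2
    have s2 : ((p ++ (List.replicate t c).flatten) ++ (c ++ s)).get ⟨p.length + f n, hb2'⟩
        = ((p ++ (List.replicate t c).flatten) ++ (c ++ s)).get
            ⟨(p ++ (List.replicate t c).flatten).length, hb2⟩ :=
      get_idx_congr hlen2.symm
    rw [s1, s2]
    exact get_append_mid _ c s hm hb2
  rw [e0, e1]

/-- let `d ≥ 1` and let `f : ℕ → ℕ` be strictly increasing such that every
`m ≥ 1` divides `f n` for some `n ≥ 1`. If the language of words over `Fin d`
satisfying the exclusion rule contains arbitrarily long words, then it is not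
context-free (in particular not regular). -/
theorem exclusion_language_not_context_free
    (d : ℕ) (hd : 1 ≤ d) (f : ℕ → ℕ) (hf : StrictMono f)
    (hdiv : ∀ m : ℕ, 1 ≤ m → ∃ n : ℕ, 1 ≤ n ∧ m ∣ f n)
    (L : Language (Fin d)) (hL : L = {w | ExclusionWord f w})
    (hlong : ∀ N : ℕ, ∃ w ∈ L, N ≤ w.length) :
    ¬ L.IsContextFree := by
  rintro ⟨g, hg⟩
  obtain ⟨u, v, x, y, z, hne, hfam⟩ := ExclusionCF.pumping_family (g := g) (by rw [hg]; exact hlong)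
  have hvy : v ≠ [] ∨ y ≠ [] := by
    rcases eq_or_ne v [] with rfl | hv
    · right; simpa using hne
    · left; exact hv
  rcases hvy with hv | hy
  · have hm : 1 ≤ v.length := List.length_pos_iff.mpr hv
    obtain ⟨n, hn, hdvd⟩ := hdiv v.length hm
    set t := f n / v.length with ht
    have hfn : f n = v.length * t := (Nat.mul_div_cancel' hdvd).symm
    have hmem := hfam (t+1)
    rw [hg, hL] at hmem
    have hexw : ExclusionWord f
        (u ++ (List.replicate (t+1) v).flatten ++ x ++ (List.replicate (t+1) y).flatten ++ z) :=
      hmem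
    have hexw' : ExclusionWord f
        (u ++ (List.replicate (t+1) v).flatten ++ (x ++ (List.replicate (t+1) y).flatten ++ z)) := by
      have e : u ++ (List.replicate (t+1) v).flatten ++ x ++ (List.replicate (t+1) y).flatten ++ z
          = u ++ (List.replicate (t+1) v).flatten ++ (x ++ (List.replicate (t+1) y).flatten ++ z) := by
        simp
      rw [← e]; exact hexw
    exact violate f u v _ hv n t hn hfn hexw'
  · have hm : 1 ≤ y.length := List.length_pos_iff.mpr hy
    obtain ⟨n, hn, hdvd⟩ := hdiv y.length hm
    set t := f n / y.length with ht
    have hfn : f n = y.length * t := (Nat.mul_div_cancel' hdvd).symm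
    have hmem := hfam (t+1)
    rw [hg, hL] at hmem
    have hexw : ExclusionWord f
        (u ++ (List.replicate (t+1) v).flatten ++ x ++ (List.replicate (t+1) y).flatten ++ z) :=
      hmem
    have hexw' : ExclusionWord f
        ((u ++ (List.replicate (t+1) v).flatten ++ x) ++ (List.replicate (t+1) y).flatten ++ z) := by
      have e : u ++ (List.replicate (t+1) v).flatten ++ x ++ (List.replicate (t+1) y).flatten ++ z
          = (u ++ (List.replicate (t+1) v).flatten ++ x) ++ (List.replicate (t+1) y).flatten ++ z := by
        simp
      rw [← e]; exact hexw
    exact violate f _ y z hy n t hn hfn hexw'
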